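/- Completeness cannot be dropped in the nested-ball limsup theorem: for X = [0,1] \ {1/2} with the gauge ξ ≡ 1, the collection B = { closed balls centered at 1/2 − 1/(2n) of radius 1/n : n ∈ ℕ } satisfies H^ξ_{rad(B̄)}(⋃ B|^{B̄}_r) ≥ 1 for every B̄ ∈ B and r ≤ rad(B̄), yet limsup 2B = ∅. -/
import Mathlib


open Metric Set MeasureTheory Filter ENNReal Topology

noncomputable section

variable {X : Type*} [MetricSpace X]

/-- A gauge function assigns a positive real to each ball (center, radius). -/
def IsGauge (ξ : X → ℝ → ℝ) : Prop := ∀ x r, 0 < r → 0 < ξ x r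

/-- `ξ` is `D`-doubling: for balls `B(x,r) ⊆ B(y,r')` with `r ≤ r' ≤ 2r`,
`D⁻¹ ξ(B) ≤ ξ(B') ≤ D ξ(B)`. -/
def IsDoublingGauge (D : ℝ) (ξ : X → ℝ → ℝ) : Prop :=
  ∀ x r y r', 0 < r → ball x r ⊆ ball y r' → r ≤ r' → r' ≤ 2 * r →
    D⁻¹ * ξ x r ≤ ξ y r' ∧ ξ y r' ≤ D * ξ x r

/-- `ν ≪ ξ` : for balls `B ⊆ B'` with `rad B ≤ rad B'`, `ξ(B')/ν(B') ≤ ξ(B)/ν(B)`. -/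
def Dominates (ν ξ : X → ℝ → ℝ) : Prop :=
  ∀ x r y r', 0 < r → ball x r ⊆ ball y r' → r ≤ r' →
    ξ y r' / ν y r' ≤ ξ x r / ν x r

open scoped Classical in
/-- Spherical Hausdorff `ξ`-content at scale `s`. -/
noncomputable def content (ξ : X → ℝ → ℝ) (s : ℝ) (A : Set X) : ℝ≥0∞ :=
  ⨅ (c : ℕ → X) (ρ : ℕ → ℝ) (_ : ∀ n, ρ n ≤ s) (_ : A ⊆ ⋃ n, ball (c n) (ρ n)),
    ∑' n, if 0 < ρ n then ENNReal.ofReal (ξ (c n) (ρ n)) else 0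

open scoped Classical in
/-- Spherical Hausdorff `ξ`-content with no scale restriction. -/
noncomputable def contentInf (ξ : X → ℝ → ℝ) (A : Set X) : ℝ≥0∞ :=
  ⨅ (c : ℕ → X) (ρ : ℕ → ℝ) (_ : A ⊆ ⋃ n, ball (c n) (ρ n)),
    ∑' n, if 0 < ρ n then ENNReal.ofReal (ξ (c n) (ρ n)) else 0

/-- The limsup set of a collection of closed balls: points lying in balls of the
collection of arbitrarily small positive radius. -/
def limsupSet (B : Set (X × ℝ)) : Set X :=
  {x | ∀ ε > 0, ∃ p ∈ B, 0 < p.2 ∧ p.2 < ε ∧ x ∈ closedBall p.1 p.2}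

/-- Inflation of a collection of balls by a factor `t`. -/
def inflate (t : ℝ) (B : Set (X × ℝ)) : Set (X × ℝ) := (fun p => (p.1, t * p.2)) '' B

/-- The closed balls of the collection are pairwise disjoint. -/
def PairwiseDisjointCB (B : Set (X × ℝ)) : Prop :=
  ∀ p ∈ B, ∀ q ∈ B, p ≠ q → Disjoint (closedBall p.1 p.2) (closedBall q.1 q.2)

lemma content_ge_one_of_nonempty {X : Type*} [MetricSpace X] (s : ℝ) (A : Set X)
    (hA : A.Nonempty) : 1 ≤ content (fun _ _ => (1:ℝ)) s A := by
  classical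
  refine le_iInf fun c => le_iInf fun ρ => le_iInf fun hρ => le_iInf fun hcov => ?_
  obtain ⟨x, hx⟩ := hA
  obtain ⟨k, hk⟩ := mem_iUnion.1 (hcov hx)
  have hρk : 0 < ρ k := lt_of_le_of_lt dist_nonneg (mem_ball.1 hk)
  calc (1 : ℝ≥0∞) = if 0 < ρ k then ENNReal.ofReal ((fun _ _ => (1:ℝ)) (c k) (ρ k)) else 0 := by
        simp [hρk]
    _ ≤ _ := ENNReal.le_tsum k

theorem stmt4 :
    ∀ B : Set ({x : ℝ // x ∈ Set.Icc (0:ℝ) 1 ∧ x ≠ 1/2} × ℝ),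
      B = {p | ∃ n : ℕ, 1 ≤ n ∧ (p.1 : ℝ) = 1/2 - 1/(2*(n:ℝ)) ∧ p.2 = 1/(n:ℝ)} →
      (∀ p ∈ B, ∀ r, 0 < r → r ≤ p.2 →
        1 ≤ content (fun _ _ => (1:ℝ)) p.2
          (⋃ q ∈ {q ∈ B | closedBall q.1 q.2 ⊆ closedBall p.1 p.2 ∧ q.2 ≤ r},
            closedBall q.1 q.2)) ∧
      limsupSet (inflate 2 B) = ∅ := by
  intro B hB
  constructor
  · intro p hp r hr hrle
    rw [hB] at hp
    obtain ⟨n, hn1, hc, hrad⟩ := hp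
    apply content_ge_one_of_nonempty
    -- choose m = max n ⌈1/r⌉₊
    set m : ℕ := max n ⌈1/r⌉₊ with hm
    have hmn : n ≤ m := le_max_left _ _
    have hm1 : 1 ≤ m := le_trans hn1 hmn
    have hmpos : (0:ℝ) < m := by exact_mod_cast hm1
    have hnpos : (0:ℝ) < n := by exact_mod_cast hn1
    have hm1' : (1:ℝ) ≤ m := by exact_mod_cast hm1
    have hmr : 1/(m:ℝ) ≤ r := by
      have h1 : (1/r : ℝ) ≤ ⌈1/r⌉₊ := Nat.le_ceil _
      have h2 : ((⌈1/r⌉₊ : ℕ) : ℝ) ≤ m := by exact_mod_cast le_max_right n ⌈1/r⌉₊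
      have : 1/r ≤ (m:ℝ) := h1.trans h2
      rw [div_le_iff₀ hmpos]
      rw [div_le_iff₀ hr] at this
      linarith
    have hmem : (1/2 - 1/(2*(m:ℝ))) ∈ Set.Icc (0:ℝ) 1 ∧ (1/2 - 1/(2*(m:ℝ))) ≠ 1/2 := by
      constructor
      · constructor
        · have : 1/(2*(m:ℝ)) ≤ 1/2 :=
            one_div_le_one_div_of_le (by norm_num) (by linarith)
          linarith
        · have : 0 < 1/(2*(m:ℝ)) := by positivity
          linarith
      · have : 0 < 1/(2*(m:ℝ)) := by positivity
        intro h; linarith [h]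
    refine ⟨⟨1/2 - 1/(2*(m:ℝ)), hmem⟩, ?_⟩
    rw [mem_iUnion₂]
    refine ⟨(⟨⟨1/2 - 1/(2*(m:ℝ)), hmem⟩, 1/(m:ℝ)⟩ :
        {x : ℝ // x ∈ Set.Icc (0:ℝ) 1 ∧ x ≠ 1/2} × ℝ), ?_, ?_⟩
    · refine ⟨?_, ?_, ?_⟩
      · rw [hB]; exact ⟨m, hm1, rfl, rfl⟩
      · -- ball containment
        intro x hx
        rw [mem_closedBall, Subtype.dist_eq, Real.dist_eq] at hx ⊢
        rw [hc, hrad]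
        have hmn' : 1/(m:ℝ) ≤ 1/(n:ℝ) :=
          one_div_le_one_div_of_le hnpos (by exact_mod_cast hmn)
        have h2mn : 1/(2*(m:ℝ)) ≤ 1/(2*(n:ℝ)) := by
          have : (n:ℝ) ≤ m := by exact_mod_cast hmn
          exact one_div_le_one_div_of_le (by positivity) (by linarith)
        have htri := abs_sub_le ((x:ℝ)) (1/2 - 1/(2*(m:ℝ))) (1/2 - 1/(2*(n:ℝ)))
        have habs : |(1/2 - 1/(2*(m:ℝ))) - (1/2 - 1/(2*(n:ℝ)))| = 1/(2*(n:ℝ)) - 1/(2*(m:ℝ)) := by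
          rw [abs_of_nonneg (by linarith)]; ring
        have em : 2*(1/(2*(m:ℝ))) = 1/(m:ℝ) := by field_simp
        have en : 2*(1/(2*(n:ℝ))) = 1/(n:ℝ) := by field_simp
        linarith
      · exact hmr
    · exact mem_closedBall_self (by positivity)
  · ext x
    simp only [mem_empty_iff_false, iff_false]
    intro hx
    have key : ∀ ε > (0:ℝ), |(x:ℝ) - 1/2| < 2*ε := by
      intro ε hε
      obtain ⟨p, hpB, hp0, hpε, hxp⟩ := hx ε hε
      obtain ⟨q, hqB, hq⟩ := hpB
      rw [hB] at hqB
      obtain ⟨n, hn1, hc, hrad⟩ := hqB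
      have hnpos : (0:ℝ) < n := by exact_mod_cast hn1
      rw [← hq] at hxp hpε
      simp only at hxp hpε
      rw [mem_closedBall, Subtype.dist_eq, Real.dist_eq, hc] at hxp
      rw [hrad] at hxp hpε
      have h1 : |(x:ℝ) - 1/2| ≤ |(x:ℝ) - (1/2 - 1/(2*(n:ℝ)))| + 1/(2*(n:ℝ)) := by
        have := abs_sub_le ((x:ℝ)) (1/2 - 1/(2*(n:ℝ))) (1/2)
        have h2 : |(1/2 - 1/(2*(n:ℝ))) - 1/2| = 1/(2*(n:ℝ)) := by
          rw [show (1/2 - 1/(2*(n:ℝ))) - 1/2 = -(1/(2*(n:ℝ))) by ring, abs_neg,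
            abs_of_pos (by positivity)]
        linarith [this, h2.le]
      have h3 : 1/(2*(n:ℝ)) < ε := by
        have en : 2*(1/(2*(n:ℝ))) = 1/(n:ℝ) := by field_simp
        have hp' : (0:ℝ) ≤ 1/(2*(n:ℝ)) := by positivity
        linarith
      have h4 : 2 * (1/(n:ℝ)) < ε := hpε
      linarith
    have hd : (0:ℝ) < |(x:ℝ) - 1/2| := by
      rw [abs_pos, sub_ne_zero]
      exact x.2.2
    have := key (|(x:ℝ) - 1/2| / 4) (by linarith)
    linarith
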